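/- Let F : (0,∞) × ℝⁿ → ℝⁿ be measurable with ‖F‖_{Y^1} < ∞. Then for every R > 0, x̃ ∈ ℝⁿ, and m ∈ ℕ₀: ∫_{R²·2^{−(m+1)}}^{R²·2^{−m}} ∫_{B_R(x̃)} R^{−(n+1)} |F(s,y)| dy ds ≤ C · 2^{−m/2} · ‖F‖_{Y^1}, with C depending only on n. -/

import Mathlib

open MeasureTheory
open scoped ENNReal NNReal

/-- The parabolic cylinder `Q_ρ(z) = [ρ²/2, ρ²] × B_ρ(z)`. -/
def Qcyl (n : ℕ) (R : ℝ) (z : EuclideanSpace ℝ (Fin n)) :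
    Set (ℝ × EuclideanSpace ℝ (Fin n)) :=
  Set.Icc (R ^ 2 / 2) (R ^ 2) ×ˢ Metric.ball z R

/-- The Carleson-type norm `‖F‖_{Y^1} = sup_{z, ρ>0} ρ ⨍_{Q_ρ(z)} |F|`. -/
noncomputable def Ynorm1 (n : ℕ)
    (F : ℝ × EuclideanSpace ℝ (Fin n) → EuclideanSpace ℝ (Fin n)) : ℝ≥0∞ :=
  ⨆ (z : EuclideanSpace ℝ (Fin n)) (R : ℝ) (_ : 0 < R),
    ENNReal.ofReal R *
      ((volume (Qcyl n R z))⁻¹ * ∫⁻ p in Qcyl n R z, (‖F p‖₊ : ℝ≥0∞))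

/-- Off-diagonal slab estimate: for every `R > 0`, `x̃` and `m ∈ ℕ`,
`∫_{R²2^{-(m+1)}}^{R²2^{-m}} ∫_{B_R(x̃)} R^{-(n+1)} |F| ≤ C 2^{-m/2} ‖F‖_{Y^1}`. -/
theorem slab_estimate (n : ℕ) (hn : 1 ≤ n) :
    ∃ C : ℝ, 0 < C ∧
      ∀ (F : ℝ × EuclideanSpace ℝ (Fin n) → EuclideanSpace ℝ (Fin n)), Measurable F →
      ∀ (R : ℝ), 0 < R → ∀ (x₀ : EuclideanSpace ℝ (Fin n)) (m : ℕ),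
        (∫⁻ p in Set.Ioc (R ^ 2 * 2 ^ (-((m : ℝ) + 1))) (R ^ 2 * 2 ^ (-(m : ℝ))) ×ˢ
            Metric.ball x₀ R,
          ENNReal.ofReal (R ^ (-((n : ℝ) + 1))) * (‖F p‖₊ : ℝ≥0∞))
          ≤ ENNReal.ofReal (C * 2 ^ (-(m : ℝ) / 2)) * Ynorm1 n F := by
  classical
  set B : ℝ≥0∞ := volume (Metric.ball (0 : (EuclideanSpace ℝ (Fin n))) 1) with hB
  have hBpos : 0 < B := Metric.measure_ball_pos _ _ one_pos
  have hBlt : B < ∞ := measure_ball_lt_top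
  have hBt : 0 < B.toReal := ENNReal.toReal_pos hBpos.ne' hBlt.ne
  refine ⟨2 ^ n * B.toReal, by positivity, ?_⟩
  intro F hF R hR x₀ m
  set g : ℝ × (EuclideanSpace ℝ (Fin n)) → ℝ≥0∞ := fun p => (‖F p‖₊ : ℝ≥0∞) with hgdef
  have hg : Measurable g := hF.nnnorm.coe_nnreal_ennreal
  set t : ℝ := 2 ^ (-(m : ℝ) / 2) with ht
  have htpos : 0 < t := Real.rpow_pos_of_pos two_pos _
  have ht1 : t ≤ 1 := Real.rpow_le_one_of_one_le_of_nonpos one_le_two (by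
    have := Nat.cast_nonneg (α := ℝ) m; linarith)
  set ρ : ℝ := R * t with hρdef
  have hρ : 0 < ρ := by positivity
  have hρR : ρ ≤ R := by
    calc ρ = R * t := rfl
    _ ≤ R * 1 := by nlinarith
    _ = R := mul_one R
  have ht2 : t * t = 2 ^ (-(m : ℝ)) := by
    rw [ht, ← Real.rpow_add (by norm_num : (0:ℝ) < 2)]; ring_nf
  have hbb : R ^ 2 * 2 ^ (-(m : ℝ)) = ρ ^ 2 := by
    rw [hρdef, mul_pow, sq t, ht2]
  have haa : R ^ 2 * 2 ^ (-((m : ℝ) + 1)) = ρ ^ 2 / 2 := by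
    rw [show -((m : ℝ) + 1) = -(m : ℝ) + (-1) from by ring,
      Real.rpow_add (by norm_num : (0:ℝ) < 2), Real.rpow_neg_one, ← hbb]
    ring
  set S : Set (ℝ × (EuclideanSpace ℝ (Fin n))) :=
    Set.Ioc (R ^ 2 * 2 ^ (-((m : ℝ) + 1))) (R ^ 2 * 2 ^ (-(m : ℝ))) ×ˢ Metric.ball x₀ R
    with hS
  set A : Set (EuclideanSpace ℝ (Fin n)) := Metric.ball x₀ (R + ρ) with hA
  -- volume of the cylinders
  have hvolQ : ∀ z : (EuclideanSpace ℝ (Fin n)), volume (Qcyl n ρ z)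
      = ENNReal.ofReal (ρ ^ 2 / 2) * volume (Metric.ball (0 : (EuclideanSpace ℝ (Fin n))) ρ) := by
    intro z
    rw [Qcyl, Measure.volume_eq_prod, Measure.prod_prod, Real.volume_Icc,
      Measure.addHaar_ball_center]
    congr 1
    rw [show ρ ^ 2 - ρ ^ 2 / 2 = ρ ^ 2 / 2 from by ring]
  have hball0 : volume (Metric.ball (0 : (EuclideanSpace ℝ (Fin n))) ρ) ≠ 0 :=
    (Metric.measure_ball_pos _ _ hρ).ne'
  have hballtop : volume (Metric.ball (0 : (EuclideanSpace ℝ (Fin n))) ρ) ≠ ∞ := measure_ball_lt_top.ne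
  have hQ0 : ∀ z : (EuclideanSpace ℝ (Fin n)), volume (Qcyl n ρ z) ≠ 0 := by
    intro z; rw [hvolQ z]
    exact mul_ne_zero (ENNReal.ofReal_pos.2 (by positivity)).ne' hball0
  have hQtop : ∀ z : (EuclideanSpace ℝ (Fin n)), volume (Qcyl n ρ z) ≠ ∞ := by
    intro z; rw [hvolQ z]
    exact ENNReal.mul_ne_top ENNReal.ofReal_ne_top hballtop
  have hρ0 : ENNReal.ofReal ρ ≠ 0 := (ENNReal.ofReal_pos.2 hρ).ne'
  -- Step 1: per-cylinder bound from the definition of the Y-norm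
  have key : ∀ z : (EuclideanSpace ℝ (Fin n)), ∫⁻ p in Qcyl n ρ z, g p
      ≤ volume (Qcyl n ρ z) * (ENNReal.ofReal ρ)⁻¹ * Ynorm1 n F := by
    intro z
    have hY : ENNReal.ofReal ρ *
        ((volume (Qcyl n ρ z))⁻¹ * ∫⁻ p in Qcyl n ρ z, g p) ≤ Ynorm1 n F :=
      le_iSup_of_le z (le_iSup_of_le ρ (le_iSup_of_le hρ le_rfl))
    have e : volume (Qcyl n ρ z) * (ENNReal.ofReal ρ)⁻¹ *
        (ENNReal.ofReal ρ * ((volume (Qcyl n ρ z))⁻¹ * ∫⁻ p in Qcyl n ρ z, g p))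
        = ∫⁻ p in Qcyl n ρ z, g p := by
      rw [show volume (Qcyl n ρ z) * (ENNReal.ofReal ρ)⁻¹ *
          (ENNReal.ofReal ρ * ((volume (Qcyl n ρ z))⁻¹ * ∫⁻ p in Qcyl n ρ z, g p))
          = ((ENNReal.ofReal ρ)⁻¹ * ENNReal.ofReal ρ) *
            ((volume (Qcyl n ρ z)) * (volume (Qcyl n ρ z))⁻¹) *
            (∫⁻ p in Qcyl n ρ z, g p) from by ring,
        ENNReal.inv_mul_cancel hρ0 ENNReal.ofReal_ne_top,
        ENNReal.mul_inv_cancel (hQ0 z) (hQtop z), one_mul, one_mul]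
    calc ∫⁻ p in Qcyl n ρ z, g p
        = volume (Qcyl n ρ z) * (ENNReal.ofReal ρ)⁻¹ *
          (ENNReal.ofReal ρ * ((volume (Qcyl n ρ z))⁻¹ * ∫⁻ p in Qcyl n ρ z, g p)) :=
          e.symm
      _ ≤ volume (Qcyl n ρ z) * (ENNReal.ofReal ρ)⁻¹ * Ynorm1 n F :=
          mul_le_mul_right hY _
  -- the indicator function on the product space
  set H : (EuclideanSpace ℝ (Fin n)) × (ℝ × (EuclideanSpace ℝ (Fin n))) → ℝ≥0∞ :=
    Set.indicator {q : (EuclideanSpace ℝ (Fin n)) × (ℝ × (EuclideanSpace ℝ (Fin n))) | q.2 ∈ Qcyl n ρ q.1} (fun q => g q.2) with hH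
  have hHsm : MeasurableSet {q : (EuclideanSpace ℝ (Fin n)) × (ℝ × (EuclideanSpace ℝ (Fin n))) | q.2 ∈ Qcyl n ρ q.1} := by
    have : {q : (EuclideanSpace ℝ (Fin n)) × (ℝ × (EuclideanSpace ℝ (Fin n))) | q.2 ∈ Qcyl n ρ q.1}
        = {q : (EuclideanSpace ℝ (Fin n)) × (ℝ × (EuclideanSpace ℝ (Fin n))) | q.2.1 ∈ Set.Icc (ρ ^ 2 / 2) (ρ ^ 2)} ∩
          {q : (EuclideanSpace ℝ (Fin n)) × (ℝ × (EuclideanSpace ℝ (Fin n))) | dist q.2.2 q.1 < ρ} := by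
      ext q; simp [Qcyl, Set.mem_prod, Metric.mem_ball, and_comm]
    rw [this]
    haveI : OpensMeasurableSpace
        ((EuclideanSpace ℝ (Fin n)) × ℝ × (EuclideanSpace ℝ (Fin n))) := by infer_instance
    have hopen : IsOpen {q : (EuclideanSpace ℝ (Fin n)) × ℝ × (EuclideanSpace ℝ (Fin n)) |
        dist q.2.2 q.1 < ρ} :=
      isOpen_lt (continuous_snd.snd.dist continuous_fst) continuous_const
    exact ((measurable_snd.fst) measurableSet_Icc).inter hopen.measurableSet
  have hHm : Measurable H := (hg.comp measurable_snd).indicator hHsm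
  -- Step 2: Tonelli / averaging over centers
  have inner_eq : ∀ z : (EuclideanSpace ℝ (Fin n)), ∫⁻ p, H (z, p) ∂volume = ∫⁻ p in Qcyl n ρ z, g p := by
    intro z
    have : ∀ p : ℝ × (EuclideanSpace ℝ (Fin n)), H (z, p) = (Qcyl n ρ z).indicator g p := by
      intro p
      by_cases hp : p ∈ Qcyl n ρ z <;>
        simp [hH, Set.indicator_apply, hp]
    simp_rw [this]
    exact lintegral_indicator (measurableSet_Icc.prod measurableSet_ball) g
  have swap : ∫⁻ z in A, ∫⁻ p, H (z, p) ∂volume ∂volume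
      = ∫⁻ p, ∫⁻ z in A, H (z, p) ∂volume ∂volume := by
    exact lintegral_lintegral_swap hHm.aemeasurable
  -- for p in the slab, the inner integral over centers is g p * volume(ball 0 ρ)
  have inner_z : ∀ p ∈ S, ∫⁻ z in A, H (z, p) ∂volume
      = g p * volume (Metric.ball (0 : (EuclideanSpace ℝ (Fin n))) ρ) := by
    intro p hp
    obtain ⟨hp1, hp2⟩ := hp
    have hp1' : p.1 ∈ Set.Icc (ρ ^ 2 / 2) (ρ ^ 2) := by
      rw [← haa, ← hbb]; exact Set.Ioc_subset_Icc_self hp1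
    have hsub : Metric.ball p.2 ρ ⊆ A := by
      intro w hw
      rw [hA, Metric.mem_ball]
      calc dist w x₀ ≤ dist w p.2 + dist p.2 x₀ := dist_triangle _ _ _
        _ < ρ + R := add_lt_add (Metric.mem_ball.1 hw) (Metric.mem_ball.1 hp2)
        _ = R + ρ := add_comm _ _
    have hHzp : ∀ z : (EuclideanSpace ℝ (Fin n)), H (z, p) = (Metric.ball p.2 ρ).indicator (fun _ => g p) z := by
      intro z
      by_cases hz : z ∈ Metric.ball p.2 ρ
      · have : (z, p) ∈ {q : (EuclideanSpace ℝ (Fin n)) × (ℝ × (EuclideanSpace ℝ (Fin n))) | q.2 ∈ Qcyl n ρ q.1} := by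
          simp only [Set.mem_setOf_eq, Qcyl, Set.mem_prod]
          exact ⟨hp1', by rw [Metric.mem_ball, dist_comm]; exact Metric.mem_ball.1 hz⟩
        simp [hH, Set.indicator_apply, this, hz]
      · have : (z, p) ∉ {q : (EuclideanSpace ℝ (Fin n)) × (ℝ × (EuclideanSpace ℝ (Fin n))) | q.2 ∈ Qcyl n ρ q.1} := by
          simp only [Set.mem_setOf_eq, Qcyl, Set.mem_prod, not_and]
          intro _
          rw [Metric.mem_ball, dist_comm]
          exact fun h => hz (Metric.mem_ball.1 h)
        simp [hH, Set.indicator_apply, this, hz]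
    simp_rw [hHzp]
    rw [lintegral_indicator measurableSet_ball, setLIntegral_const,
      Measure.restrict_apply measurableSet_ball,
      Set.inter_eq_self_of_subset_left hsub, Measure.addHaar_ball_center]
  have hSm : MeasurableSet S := measurableSet_Ioc.prod measurableSet_ball
  -- the main chain
  have main : volume (Metric.ball (0 : (EuclideanSpace ℝ (Fin n))) ρ) * ∫⁻ p in S, g p
      ≤ ENNReal.ofReal (ρ ^ 2 / 2) * volume (Metric.ball (0 : (EuclideanSpace ℝ (Fin n))) ρ) *
        (ENNReal.ofReal ρ)⁻¹ * Ynorm1 n F * volume A := by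
    calc volume (Metric.ball (0 : (EuclideanSpace ℝ (Fin n))) ρ) * ∫⁻ p in S, g p
        = ∫⁻ p in S, g p * volume (Metric.ball (0 : (EuclideanSpace ℝ (Fin n))) ρ) := by
          rw [lintegral_mul_const _ hg, mul_comm]
      _ = ∫⁻ p in S, ∫⁻ z in A, H (z, p) ∂volume := by
          refine (setLIntegral_congr_fun hSm ?_).symm
          intro p hp
          exact inner_z p hp
      _ ≤ ∫⁻ p, ∫⁻ z in A, H (z, p) ∂volume ∂volume := setLIntegral_le_lintegral _ _
      _ = ∫⁻ z in A, ∫⁻ p, H (z, p) ∂volume ∂volume := swap.symm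
      _ = ∫⁻ z in A, (∫⁻ p in Qcyl n ρ z, g p) ∂volume := by
          refine lintegral_congr fun z => inner_eq z
      _ ≤ ∫⁻ _ in A, (ENNReal.ofReal (ρ ^ 2 / 2) * volume (Metric.ball (0 : (EuclideanSpace ℝ (Fin n))) ρ) *
            (ENNReal.ofReal ρ)⁻¹ * Ynorm1 n F) ∂volume := by
          refine lintegral_mono fun z => ?_
          calc ∫⁻ p in Qcyl n ρ z, g p
              ≤ volume (Qcyl n ρ z) * (ENNReal.ofReal ρ)⁻¹ * Ynorm1 n F := key z
            _ = ENNReal.ofReal (ρ ^ 2 / 2) * volume (Metric.ball (0 : (EuclideanSpace ℝ (Fin n))) ρ) *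
                (ENNReal.ofReal ρ)⁻¹ * Ynorm1 n F := by rw [hvolQ z]
      _ = ENNReal.ofReal (ρ ^ 2 / 2) * volume (Metric.ball (0 : (EuclideanSpace ℝ (Fin n))) ρ) *
            (ENNReal.ofReal ρ)⁻¹ * Ynorm1 n F * volume A := by
          rw [setLIntegral_const]
  have main2 : ∫⁻ p in S, g p
      ≤ ENNReal.ofReal (ρ / 2) * Ynorm1 n F * volume A := by
    have h1 : volume (Metric.ball (0 : (EuclideanSpace ℝ (Fin n))) ρ) * ∫⁻ p in S, g p
        ≤ volume (Metric.ball (0 : (EuclideanSpace ℝ (Fin n))) ρ) *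
          (ENNReal.ofReal (ρ / 2) * Ynorm1 n F * volume A) := by
      refine main.trans (le_of_eq ?_)
      have : ENNReal.ofReal (ρ ^ 2 / 2) * (ENNReal.ofReal ρ)⁻¹
          = ENNReal.ofReal (ρ / 2) := by
        rw [← ENNReal.ofReal_inv_of_pos hρ, ← ENNReal.ofReal_mul (by positivity)]
        congr 1
        field_simp
      calc ENNReal.ofReal (ρ ^ 2 / 2) * volume (Metric.ball (0 : (EuclideanSpace ℝ (Fin n))) ρ) *
            (ENNReal.ofReal ρ)⁻¹ * Ynorm1 n F * volume A
          = volume (Metric.ball (0 : (EuclideanSpace ℝ (Fin n))) ρ) *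
            ((ENNReal.ofReal (ρ ^ 2 / 2) * (ENNReal.ofReal ρ)⁻¹) * Ynorm1 n F *
              volume A) := by ring
        _ = volume (Metric.ball (0 : (EuclideanSpace ℝ (Fin n))) ρ) *
            (ENNReal.ofReal (ρ / 2) * Ynorm1 n F * volume A) := by rw [this]
    exact (ENNReal.mul_le_mul_iff_right hball0 hballtop).1 h1
  -- volume of A
  have hvolA : volume A = ENNReal.ofReal ((R + ρ) ^ n) * B := by
    rw [hA, Measure.addHaar_ball_of_pos _ _ (by positivity : (0:ℝ) < R + ρ)]
    congr 2
    rw [finrank_euclideanSpace_fin]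
  -- pull the constant out of the LHS integral
  rw [lintegral_const_mul _ hg]
  -- finish
  calc ENNReal.ofReal (R ^ (-((n : ℝ) + 1))) * ∫⁻ p in S, g p
      ≤ ENNReal.ofReal (R ^ (-((n : ℝ) + 1))) *
        (ENNReal.ofReal (ρ / 2) * Ynorm1 n F * volume A) := mul_le_mul_right main2 _
    _ = (ENNReal.ofReal (R ^ (-((n : ℝ) + 1))) * ENNReal.ofReal (ρ / 2) *
        (ENNReal.ofReal ((R + ρ) ^ n) * B)) * Ynorm1 n F := by
        rw [hvolA]; ring
    _ ≤ ENNReal.ofReal (2 ^ n * B.toReal * 2 ^ (-(m : ℝ) / 2)) * Ynorm1 n F := by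
        refine mul_le_mul_left ?_ _
        have hBr : B = ENNReal.ofReal B.toReal := (ENNReal.ofReal_toReal hBlt.ne).symm
        rw [hBr, ← ENNReal.ofReal_mul (by positivity), ← ENNReal.ofReal_mul (by positivity),
          ← ENNReal.ofReal_mul (by positivity)]
        rw [ENNReal.toReal_ofReal hBt.le]
        refine ENNReal.ofReal_le_ofReal ?_
        -- the purely real inequality
        have hpow : R ^ (-((n : ℝ) + 1)) = ((R : ℝ) ^ (n + 1))⁻¹ := by
          rw [← Real.rpow_natCast R (n + 1), ← Real.rpow_neg hR.le]
          norm_num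
        have hRn1 : (0:ℝ) < R ^ (n + 1) := by positivity
        have h2R : (R + ρ) ^ n ≤ (2 * R) ^ n := by
          refine pow_le_pow_left₀ (by positivity) (by linarith) n
        calc R ^ (-((n : ℝ) + 1)) * (ρ / 2) * ((R + ρ) ^ n * B.toReal)
            ≤ (R ^ (n + 1))⁻¹ * (ρ / 2) * ((2 * R) ^ n * B.toReal) := by
              rw [hpow]
              have h0 : (0:ℝ) ≤ (R ^ (n + 1))⁻¹ * (ρ / 2) := by positivity
              exact mul_le_mul_of_nonneg_left
                (mul_le_mul_of_nonneg_right h2R hBt.le) h0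
          _ = 2 ^ n * B.toReal * t / 2 := by
              rw [hρdef, mul_pow]
              field_simp
              ring
          _ ≤ 2 ^ n * B.toReal * t := by
              have : (0:ℝ) ≤ 2 ^ n * B.toReal * t := by positivity
              linarith
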